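/- Let Φ : M_d(ℂ) → M_k(ℂ) be a unital 2-positive map with support projection R (the minimal projection with Φ(R) = I, satisfying Φ(A) = Φ(RAR) for all A, and Φ(A) = 0 iff RAR = 0 for effects A). If A is an effect (0 ≤ A ≤ I) such that Φ(A) is a projection, then RAR is a projection, RA = AR, and A = RAR + R^⊥ A R^⊥. -/

import Mathlib

open Matrix
open scoped ComplexOrder

section Aux

open scoped MatrixOrder

/-- A positive semidefinite matrix whose negative is also positive semidefinite is zero. -/
lemma psd_neg_eq_zero {n : ℕ} {X : Matrix (Fin n) (Fin n) ℂ}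
    (h1 : X.PosSemidef) (h2 : (-X).PosSemidef) : X = 0 := by
  obtain ⟨B, rfl⟩ : ∃ B : Matrix (Fin n) (Fin n) ℂ, X = Bᴴ * B :=
    ⟨CFC.sqrt X, by rw [(CFC.sqrt_nonneg X).posSemidef.isHermitian.eq,
      CFC.sqrt_mul_sqrt_self X h1.nonneg]⟩
  suffices hB : B = 0 by simp [hB]
  ext i j
  have hv : B *ᵥ Pi.single j 1 = 0 := by
    set v : Fin n → ℂ := Pi.single j 1 with hvdef
    have hle : star v ⬝ᵥ (Bᴴ * B) *ᵥ v ≤ 0 := by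
      have := h2.dotProduct_mulVec_nonneg v
      rwa [Matrix.neg_mulVec, dotProduct_neg, le_neg, neg_zero] at this
    have hge : 0 ≤ star v ⬝ᵥ (Bᴴ * B) *ᵥ v := h1.dotProduct_mulVec_nonneg v
    have h0 : star v ⬝ᵥ (Bᴴ * B) *ᵥ v = 0 := le_antisymm hle hge
    have hrw : star v ⬝ᵥ (Bᴴ * B) *ᵥ v = star (B *ᵥ v) ⬝ᵥ (B *ᵥ v) := by
      rw [← Matrix.mulVec_mulVec, Matrix.dotProduct_mulVec, ← Matrix.star_mulVec]
    rw [hrw] at h0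
    exact dotProduct_star_self_eq_zero.mp h0
  have := congr_fun hv i
  simpa [Matrix.mulVec_single] using this

/-- Hermitian idempotents are positive semidefinite. -/
lemma proj_psd {n : ℕ} {P : Matrix (Fin n) (Fin n) ℂ}
    (hP : P.IsHermitian) (hP2 : P * P = P) : P.PosSemidef := by
  have : P = Pᴴ * P := by rw [hP.eq, hP2]
  rw [this]
  exact Matrix.posSemidef_conjTranspose_mul_self P

/-- The Kadison–Schwarz inequality for a unital 2-positive map, for Hermitian arguments;
also records that `Φ` preserves Hermiticity. -/
lemma schwarz_aux {d k : ℕ}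
    (Φ : Matrix (Fin d) (Fin d) ℂ →ₗ[ℂ] Matrix (Fin k) (Fin k) ℂ)
    (hunital : Φ 1 = 1)
    (h2pos : ∀ A B C D : Matrix (Fin d) (Fin d) ℂ,
      (Matrix.fromBlocks A B C D).PosSemidef →
      (Matrix.fromBlocks (Φ A) (Φ B) (Φ C) (Φ D)).PosSemidef)
    {B : Matrix (Fin d) (Fin d) ℂ} (hB : B.IsHermitian) :
    (Φ B)ᴴ = Φ B ∧ (Φ (B * B) - Φ B * Φ B).PosSemidef := by
  have hblock : (Matrix.fromBlocks (1 : Matrix (Fin d) (Fin d) ℂ) B B (B * B)).PosSemidef := by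
    have h := Matrix.posSemidef_conjTranspose_mul_self
      ((Matrix.fromBlocks (1 : Matrix (Fin d) (Fin d) ℂ) B 0 0) :
        Matrix (Fin d ⊕ Fin d) (Fin d ⊕ Fin d) ℂ)
    have heq : (Matrix.fromBlocks (1 : Matrix (Fin d) (Fin d) ℂ) B 0 0)ᴴ *
        Matrix.fromBlocks (1 : Matrix (Fin d) (Fin d) ℂ) B 0 0
        = Matrix.fromBlocks 1 B B (B * B) := by
      rw [Matrix.fromBlocks_conjTranspose, Matrix.fromBlocks_multiply]
      simp [hB.eq]
    rwa [heq] at h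
  have h2 := h2pos _ _ _ _ hblock
  rw [hunital] at h2
  have herm := h2.1
  rw [Matrix.isHermitian_fromBlocks_iff] at herm
  have hΦBh : (Φ B)ᴴ = Φ B := herm.2.1
  refine ⟨hΦBh, ?_⟩
  have h3 : (Matrix.fromBlocks (1 : Matrix (Fin k) (Fin k) ℂ) (Φ B) (Φ B)ᴴ (Φ (B * B))).PosSemidef := by
    rwa [hΦBh]
  haveI : Invertible (1 : Matrix (Fin k) (Fin k) ℂ) := invertibleOne
  have h4 := (Matrix.PosDef.fromBlocks₁₁ (Φ B) (Φ (B * B)) Matrix.PosDef.one).mp h3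
  simpa [hΦBh, inv_one, Matrix.mul_one, Matrix.one_mul] using h4

/-- A unital 2-positive map is positive. -/
lemma posmap_aux {d k : ℕ}
    (Φ : Matrix (Fin d) (Fin d) ℂ →ₗ[ℂ] Matrix (Fin k) (Fin k) ℂ)
    (hunital : Φ 1 = 1)
    (h2pos : ∀ A B C D : Matrix (Fin d) (Fin d) ℂ,
      (Matrix.fromBlocks A B C D).PosSemidef →
      (Matrix.fromBlocks (Φ A) (Φ B) (Φ C) (Φ D)).PosSemidef)
    {B : Matrix (Fin d) (Fin d) ℂ} (hB : B.PosSemidef) : (Φ B).PosSemidef := by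
  have hS := (CFC.sqrt_nonneg B).posSemidef
  have hmul := CFC.sqrt_mul_sqrt_self B hB.nonneg
  obtain ⟨hh, hpsd⟩ := schwarz_aux Φ hunital h2pos hS.isHermitian
  have key : Φ B = (Φ (CFC.sqrt B * CFC.sqrt B) - Φ (CFC.sqrt B) * Φ (CFC.sqrt B))
      + (Φ (CFC.sqrt B))ᴴ * Φ (CFC.sqrt B) := by
    rw [hh, hmul, sub_add_cancel]
  rw [key]
  exact hpsd.add (Matrix.posSemidef_conjTranspose_mul_self _)

/-- For an effect `B` (i.e. `0 ≤ B ≤ 1`), `B - B² ≥ 0`. -/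
lemma effect_sq_aux {n : ℕ} {B : Matrix (Fin n) (Fin n) ℂ}
    (h0 : B.PosSemidef) (h1 : (1 - B).PosSemidef) : (B - B * B).PosSemidef := by
  obtain ⟨S, hSherm, hmul⟩ : ∃ S : Matrix (Fin n) (Fin n) ℂ, S.IsHermitian ∧ S * S = B :=
    ⟨CFC.sqrt B, (CFC.sqrt_nonneg B).posSemidef.isHermitian, CFC.sqrt_mul_sqrt_self B h0.nonneg⟩
  subst hmul
  have key : S * S - (S * S) * (S * S) = Sᴴ * (1 - S * S) * S := by
    rw [hSherm.eq]; noncomm_ring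
  rw [key]
  exact h1.conjTranspose_mul_mul_same _

end Aux

/-- If Φ is a unital 2-positive map with support projection R and A is an effect
with Φ(A) a projection, then RAR is a projection, R commutes with A, and
A = RAR + R^⊥AR^⊥. -/
theorem support_projection_effect_decomposition
    (d k : ℕ)
    (Φ : Matrix (Fin d) (Fin d) ℂ →ₗ[ℂ] Matrix (Fin k) (Fin k) ℂ)
    (hunital : Φ 1 = 1)
    (h2pos : ∀ A B C D : Matrix (Fin d) (Fin d) ℂ,
      (Matrix.fromBlocks A B C D).PosSemidef →
      (Matrix.fromBlocks (Φ A) (Φ B) (Φ C) (Φ D)).PosSemidef)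
    (R : Matrix (Fin d) (Fin d) ℂ)
    (hRh : R.IsHermitian) (hR2 : R * R = R)
    (hΦR : Φ R = 1)
    (hsupp : ∀ A : Matrix (Fin d) (Fin d) ℂ, Φ A = Φ (R * A * R))
    (hker : ∀ A : Matrix (Fin d) (Fin d) ℂ, A.PosSemidef → (1 - A).PosSemidef →
      (Φ A = 0 ↔ R * A * R = 0))
    (A : Matrix (Fin d) (Fin d) ℂ)
    (hA0 : A.PosSemidef) (hA1 : (1 - A).PosSemidef)
    (hΦAh : (Φ A).IsHermitian) (hΦA2 : Φ A * Φ A = Φ A) :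
    (R * A * R) * (R * A * R) = R * A * R ∧
    R * A = A * R ∧
    A = R * A * R + (1 - R) * A * (1 - R) := by
  -- abbreviations
  set Q : Matrix (Fin d) (Fin d) ℂ := R * A * R with hQdef
  -- basic algebraic facts about R
  have hR'h : (1 - R).IsHermitian := by
    unfold Matrix.IsHermitian
    rw [Matrix.conjTranspose_sub, Matrix.conjTranspose_one, hRh.eq]
  have hR'2 : (1 - R) * (1 - R) = 1 - R := by
    have : (1 - R) * (1 - R) = 1 - R - R + R * R := by noncomm_ring
    rw [this, hR2]; abel
  have hRpsd : R.PosSemidef := proj_psd hRh hR2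
  have hR'psd : (1 - R).PosSemidef := proj_psd hR'h hR'2
  -- Q is an effect
  have hQpsd : Q.PosSemidef := by
    have : Q = Rᴴ * A * R := by rw [hRh.eq]
    rw [this]
    exact hA0.conjTranspose_mul_mul_same _
  have hQ1 : (1 - Q).PosSemidef := by
    have key : 1 - Q = (1 - R) + Rᴴ * (1 - A) * R := by
      rw [hRh.eq, hQdef]
      have : R * (1 - A) * R = R * R - R * A * R := by noncomm_ring
      rw [this, hR2]; abel
    rw [key]
    exact hR'psd.add (hA1.conjTranspose_mul_mul_same _)
  have hQherm : Q.IsHermitian := hQpsd.isHermitian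
  -- step 1 : Φ (A - A*A) = 0, hence R(A - A²)R = 0, i.e. Q = R A² R
  have hAA_psd : (A * A).PosSemidef := by
    have : A * A = Aᴴ * A := by rw [hA0.isHermitian.eq]
    rw [this]; exact Matrix.posSemidef_conjTranspose_mul_self A
  have hstep1 : R * (A * A) * R = Q := by
    have hEpsd : (A - A * A).PosSemidef := effect_sq_aux hA0 hA1
    have hE1 : (1 - (A - A * A)).PosSemidef := by
      have : (1 : Matrix (Fin d) (Fin d) ℂ) - (A - A * A) = (1 - A) + A * A := by abel
      rw [this]; exact hA1.add hAA_psd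
    have hpos : (Φ (A - A * A)).PosSemidef := posmap_aux Φ hunital h2pos hEpsd
    have hneg : (-(Φ (A - A * A))).PosSemidef := by
      have hsch := (schwarz_aux Φ hunital h2pos hA0.isHermitian).2
      have : -(Φ (A - A * A)) = Φ (A * A) - Φ A * Φ A := by
        rw [map_sub, hΦA2, neg_sub]
      rw [this]; exact hsch
    have hzero : Φ (A - A * A) = 0 := psd_neg_eq_zero hpos hneg
    have := (hker (A - A * A) hEpsd hE1).mp hzero
    have hexp : R * (A - A * A) * R = Q - R * (A * A) * R := by
      rw [hQdef]; noncomm_ring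
    rw [hexp] at this
    exact (sub_eq_zero.mp this).symm
  -- step 2 : Q is idempotent
  have hΦQ : Φ Q = Φ A := (hsupp A).symm
  have hRQ : R * Q = Q := by
    rw [hQdef, show R * (R * A * R) = (R * R) * A * R by noncomm_ring, hR2]
  have hQR : Q * R = Q := by
    rw [hQdef, show (R * A * R) * R = R * A * (R * R) by noncomm_ring, hR2]
  have hQidem : Q * Q = Q := by
    have hEpsd : (Q - Q * Q).PosSemidef := effect_sq_aux hQpsd hQ1
    have hQQpsd : (Q * Q).PosSemidef := by
      have : Q * Q = Qᴴ * Q := by rw [hQherm.eq]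
      rw [this]; exact Matrix.posSemidef_conjTranspose_mul_self Q
    have hE1 : (1 - (Q - Q * Q)).PosSemidef := by
      have : (1 : Matrix (Fin d) (Fin d) ℂ) - (Q - Q * Q) = (1 - Q) + Q * Q := by abel
      rw [this]; exact hQ1.add hQQpsd
    have hpos : (Φ (Q - Q * Q)).PosSemidef := posmap_aux Φ hunital h2pos hEpsd
    have hneg : (-(Φ (Q - Q * Q))).PosSemidef := by
      have hsch := (schwarz_aux Φ hunital h2pos hQherm).2
      have : -(Φ (Q - Q * Q)) = Φ (Q * Q) - Φ Q * Φ Q := by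
        rw [map_sub, hΦQ, hΦA2, neg_sub]
      rw [this]; exact hsch
    have hzero : Φ (Q - Q * Q) = 0 := psd_neg_eq_zero hpos hneg
    have h0 := (hker (Q - Q * Q) hEpsd hE1).mp hzero
    have hexp : R * (Q - Q * Q) * R = Q - Q * Q := by
      have e : R * (Q - Q * Q) * R = (R * Q) * R - (R * Q) * (Q * R) := by noncomm_ring
      rw [e, hRQ, hQR]
    rw [hexp] at h0
    exact (sub_eq_zero.mp h0).symm
  -- step 3 : the off-diagonal corner vanishes
  have hXXh : (R * A * (1 - R)) * (R * A * (1 - R))ᴴ = 0 := by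
    have hconj : (R * A * (1 - R))ᴴ = (1 - R) * A * R := by
      rw [Matrix.conjTranspose_mul, Matrix.conjTranspose_mul, hR'h.eq, hA0.isHermitian.eq,
        hRh.eq, Matrix.mul_assoc]
    rw [hconj]
    have hsplit : R * (A * A) * R = Q * Q + (R * A * (1 - R)) * ((1 - R) * A * R) := by
      have e1 : (R * A * (1 - R)) * ((1 - R) * A * R)
          = R * A * ((1 - R) * (1 - R)) * A * R := by noncomm_ring
      have e2 : Q * Q = R * A * (R * R) * A * R := by rw [hQdef]; noncomm_ring
      rw [e1, e2, hR'2, hR2]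
      noncomm_ring
    have : Q * Q + (R * A * (1 - R)) * ((1 - R) * A * R) = Q := by
      rw [← hsplit, hstep1]
    rw [hQidem] at this
    exact add_left_cancel (a := Q) (by rw [this, add_zero])
  have hX : R * A * (1 - R) = 0 := Matrix.self_mul_conjTranspose_eq_zero.mp hXXh
  have hX' : (1 - R) * A * R = 0 := by
    have hconj : (R * A * (1 - R))ᴴ = (1 - R) * A * R := by
      rw [Matrix.conjTranspose_mul, Matrix.conjTranspose_mul, hR'h.eq, hA0.isHermitian.eq,
        hRh.eq, Matrix.mul_assoc]
    rw [← hconj, hX, Matrix.conjTranspose_zero]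
  -- conclusion
  refine ⟨hQidem, ?_, ?_⟩
  · have e1 : R * A = R * A * R + R * A * (1 - R) := by noncomm_ring
    have e2 : A * R = R * A * R + (1 - R) * A * R := by noncomm_ring
    rw [e1, e2, hX, hX', add_zero]
  · have e3 : A = R * A * R + R * A * (1 - R) + (1 - R) * A * R + (1 - R) * A * (1 - R) := by
      noncomm_ring
    conv_lhs => rw [e3]
    rw [hX, hX']
    abel
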